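/- For a joint PMF P on X × Y with all values positive and ρ ∈ [0,1], the total variation distance between P and the product P̄^{(ρ)}_Y × P^{(ρ)}_{X|Y} satisfies ∑_{x,y} |P(x,y) − P̄^{(ρ)}_Y(y)P^{(ρ)}_{X|Y}(x|y)| ≤ 2(1 − |X|^{-ρ}). -/

import Mathlib

open Finset

/-- Total variation bound:
`∑_{x,y} |P(x,y) − P̄^{(ρ)}_Y(y) P^{(ρ)}_{X|Y}(x|y)| ≤ 2 (1 − |X|^{-ρ})`. -/
theorem tv_tilted_product_le {X Y : Type*} [Fintype X] [Fintype Y]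
    [Nonempty X] [Nonempty Y] (P : X × Y → ℝ)
    (hPpos : ∀ p, 0 < P p) (hP1 : ∑ p, P p = 1)
    (ρ : ℝ) (hρ0 : 0 ≤ ρ) (hρ1 : ρ ≤ 1)
    (V : X → Y → ℝ)
    (hV : ∀ x y, V x y = P (x, y) ^ (1 / (1 + ρ)) / ∑ x', P (x', y) ^ (1 / (1 + ρ)))
    (Q : Y → ℝ)
    (hQ : ∀ y, Q y = (∑ x, P (x, y) ^ (1 / (1 + ρ))) ^ (1 + ρ) /
      ∑ y', (∑ x, P (x, y') ^ (1 / (1 + ρ))) ^ (1 + ρ)) :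
    ∑ x, ∑ y, |P (x, y) - Q y * V x y| ≤
      2 * (1 - (Fintype.card X : ℝ) ^ (-ρ)) := by
  have hρ1' : (0:ℝ) < 1 + ρ := by linarith
  set n : ℝ := (Fintype.card X : ℝ) with hn
  have hn1 : (1:ℝ) ≤ n := by
    have := Fintype.card_pos (α := X)
    rw [hn]; exact_mod_cast this
  have hn0 : (0:ℝ) < n := by linarith
  set c : ℝ := n ^ (-ρ) with hc
  have hc0 : 0 < c := Real.rpow_pos_of_pos hn0 _
  have hc1 : c ≤ 1 := Real.rpow_le_one_of_one_le_of_nonpos hn1 (by linarith)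
  set a : Y → ℝ := fun y => ∑ x, P (x, y) ^ (1 / (1 + ρ)) with ha
  have hapos : ∀ y, 0 < a y := fun y =>
    Finset.sum_pos (fun x _ => Real.rpow_pos_of_pos (hPpos _) _) univ_nonempty
  set Z : ℝ := ∑ y, a y ^ (1 + ρ) with hZ
  have hZpos : 0 < Z :=
    Finset.sum_pos (fun y _ => Real.rpow_pos_of_pos (hapos y) _) univ_nonempty
  have hQ' : ∀ y, Q y = a y ^ (1 + ρ) / Z := fun y => hQ y
  have hV' : ∀ x y, V x y = P (x, y) ^ (1 / (1 + ρ)) / a y := fun x y => hV x y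
  have hPsum2 : ∑ x, ∑ y, P (x, y) = 1 := by rw [← hP1, Fintype.sum_prod_type]
  have hPsum : ∑ y, ∑ x, P (x, y) = 1 := by rw [← hPsum2]; exact Finset.sum_comm
  -- power mean: a y ^ (1+ρ) ≤ n^ρ * ∑ x, P (x,y)
  have hkey : ∀ y, a y ^ (1 + ρ) ≤ n ^ ρ * ∑ x, P (x, y) := by
    intro y
    have hpm := Real.rpow_arith_mean_le_arith_mean_rpow (univ : Finset X)
      (fun _ => n⁻¹) (fun x => P (x, y) ^ (1 / (1 + ρ)))
      (fun i _ => by positivity)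
      (by rw [Finset.sum_const, Finset.card_univ, nsmul_eq_mul, ← hn, mul_inv_cancel₀ hn0.ne'])
      (fun i _ => Real.rpow_nonneg (hPpos _).le _) (p := 1 + ρ) (by linarith)
    have hzz : ∀ x : X, (P (x, y) ^ (1 / (1 + ρ))) ^ (1 + ρ) = P (x, y) := by
      intro x
      rw [← Real.rpow_mul (hPpos _).le, one_div, inv_mul_cancel₀ (ne_of_gt hρ1'),
        Real.rpow_one]
    calc a y ^ (1 + ρ) = n ^ (1 + ρ) * (n⁻¹ * a y) ^ (1 + ρ) := by
          rw [Real.mul_rpow (by positivity) (hapos y).le, ← mul_assoc,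
            ← Real.mul_rpow hn0.le (by positivity), mul_inv_cancel₀ hn0.ne',
            Real.one_rpow, one_mul]
      _ ≤ n ^ (1 + ρ) * (n⁻¹ * ∑ x, P (x, y)) := by
          refine mul_le_mul_of_nonneg_left ?_ (by positivity)
          calc (n⁻¹ * a y) ^ (1 + ρ)
              = (∑ x, n⁻¹ * P (x, y) ^ (1 / (1 + ρ))) ^ (1 + ρ) := by
                rw [ha]; rw [Finset.mul_sum]
            _ ≤ ∑ x, n⁻¹ * (P (x, y) ^ (1 / (1 + ρ))) ^ (1 + ρ) := hpm
            _ = n⁻¹ * ∑ x, P (x, y) := by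
                rw [← Finset.mul_sum]; congr 1
                exact Finset.sum_congr rfl fun x _ => by rw [hzz]
      _ = n ^ ρ * ∑ x, P (x, y) := by
          rw [← mul_assoc]; congr 1
          rw [← Real.rpow_neg_one n, ← Real.rpow_add hn0]; norm_num
  have hZle : Z ≤ n ^ ρ := by
    calc Z ≤ ∑ y, n ^ ρ * ∑ x, P (x, y) := Finset.sum_le_sum fun y _ => hkey y
      _ = n ^ ρ := by rw [← Finset.mul_sum, hPsum, mul_one]
  -- pointwise lower bound on Q y * V x y
  have hQV : ∀ x y, c * P (x, y) ≤ Q y * V x y := by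
    intro x y
    have h1 : Q y * V x y = a y ^ ρ * P (x, y) ^ (1 / (1 + ρ)) / Z := by
      rw [hQ' y, hV' x y]
      have h2 : a y ^ (1 + ρ) = a y ^ ρ * a y := by
        rw [show (1:ℝ) + ρ = ρ + 1 by ring, Real.rpow_add (hapos y), Real.rpow_one]
      rw [h2]; field_simp [(hapos y).ne', hZpos.ne']
    have hle : P (x, y) ^ (1 / (1 + ρ)) ≤ a y :=
      Finset.single_le_sum (f := fun x' => P (x', y) ^ (1 / (1 + ρ)))
        (fun i _ => Real.rpow_nonneg (hPpos _).le _) (mem_univ x)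
    have h3 : P (x, y) ^ (ρ / (1 + ρ)) ≤ a y ^ ρ := by
      calc P (x, y) ^ (ρ / (1 + ρ)) = (P (x, y) ^ (1 / (1 + ρ))) ^ ρ := by
            rw [← Real.rpow_mul (hPpos _).le]; ring_nf
        _ ≤ a y ^ ρ := Real.rpow_le_rpow (Real.rpow_nonneg (hPpos _).le _) hle hρ0
    have h2 : P (x, y) ≤ a y ^ ρ * P (x, y) ^ (1 / (1 + ρ)) := by
      calc P (x, y) = P (x, y) ^ (ρ / (1 + ρ)) * P (x, y) ^ (1 / (1 + ρ)) := by
            rw [← Real.rpow_add (hPpos _), ← add_div,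
              show ρ + 1 = 1 + ρ from add_comm ρ 1, div_self (ne_of_gt hρ1'),
              Real.rpow_one]
        _ ≤ a y ^ ρ * P (x, y) ^ (1 / (1 + ρ)) :=
            mul_le_mul_of_nonneg_right h3 (Real.rpow_nonneg (hPpos _).le _)
    have h4 : c * P (x, y) = P (x, y) / n ^ ρ := by
      rw [hc, Real.rpow_neg hn0.le, mul_comm, div_eq_mul_inv]
    rw [h1, h4]
    exact div_le_div₀ (mul_nonneg (Real.rpow_nonneg (hapos y).le _)
      (Real.rpow_nonneg (hPpos _).le _)) h2 hZpos hZle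
  -- sums
  have hVsum : ∀ y, ∑ x, V x y = 1 := by
    intro y
    rw [show (∑ x, V x y) = ∑ x, P (x, y) ^ (1 / (1 + ρ)) / a y from
      Finset.sum_congr rfl fun x _ => hV' x y, ← Finset.sum_div]
    exact div_self (hapos y).ne'
  have hQsum : ∑ y, Q y = 1 := by
    rw [show (∑ y, Q y) = ∑ y, a y ^ (1 + ρ) / Z from
      Finset.sum_congr rfl fun y _ => hQ' y, ← Finset.sum_div]
    exact div_self hZpos.ne'
  have hsumQV : ∑ x, ∑ y, Q y * V x y = 1 := by
    rw [Finset.sum_comm]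
    calc ∑ y, ∑ x, Q y * V x y = ∑ y, Q y * ∑ x, V x y :=
          Finset.sum_congr rfl fun y _ => (Finset.mul_sum _ _ _).symm
      _ = 1 := by simp only [hVsum, mul_one]; exact hQsum
  calc ∑ x, ∑ y, |P (x, y) - Q y * V x y|
      ≤ ∑ x, ∑ y, (P (x, y) + Q y * V x y - 2 * (c * P (x, y))) := by
        refine Finset.sum_le_sum fun x _ => Finset.sum_le_sum fun y _ => ?_
        rw [abs_sub_le_iff]
        constructor
        · linarith [hQV x y]
        · nlinarith [mul_nonneg (sub_nonneg.mpr hc1) (hPpos (x, y)).le, hQV x y]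
    _ = (∑ x, ∑ y, P (x, y)) + (∑ x, ∑ y, Q y * V x y)
          - 2 * (c * (∑ x, ∑ y, P (x, y))) := by
        simp only [Finset.sum_sub_distrib, Finset.sum_add_distrib, ← Finset.mul_sum]
    _ ≤ 2 * (1 - c) := by rw [hsumQV, hPsum2]; ring_nf; linarith
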